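/- Let u : [0,∞) → ℝ be non-decreasing with u(0) = 0, and let g : [0,∞) → [0,∞) be continuous with ∫_{[0,∞)} g(s) du(s) = 0, where the integral is the Lebesgue–Stieltjes integral with respect to u. Then at every point t ≥ 0 at which u is differentiable, g(t) · u′(t) = 0. -/

import Mathlib

open Filter Topology MeasureTheory

open scoped Classical in
/-- The Lebesgue–Stieltjes measure associated with a non-decreasing `g : ℝ → ℝ`
(junk value `0` if `g` is not monotone). -/
noncomputable def lsMeasure (g : ℝ → ℝ) : Measure ℝ :=
  if h : Monotone g then h.stieltjesFunction.measure else 0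

/-- If `u : [0,∞) → ℝ` is non-decreasing with `u 0 = 0` (extended by `0` to the
negative reals), `g : [0,∞) → [0,∞)` is continuous, and the Lebesgue–Stieltjes
integral `∫_{[0,∞)} g du = 0`, then `g t * u' t = 0` at every `t ≥ 0` where `u`
is differentiable. -/
theorem stmt_11 (u g : ℝ → ℝ)
    (hu_mono : Monotone u) (hu_zero : ∀ t : ℝ, t ≤ 0 → u t = 0)
    (hg_cont : ContinuousOn g (Set.Ici 0))
    (hg_nonneg : ∀ t : ℝ, 0 ≤ t → 0 ≤ g t)
    (hint : ∫⁻ s in Set.Ici (0:ℝ), ENNReal.ofReal (g s) ∂(lsMeasure u) = 0) :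
    ∀ t : ℝ, 0 ≤ t → ∀ d : ℝ, HasDerivAt u d t → g t * d = 0 := by
  intro t ht d hd
  by_cases hgt : g t = 0
  · simp [hgt]
  have hgt' : 0 < g t := lt_of_le_of_ne (hg_nonneg t ht) (Ne.symm hgt)
  -- d ≥ 0 since u is monotone
  by_cases hd0 : d = 0
  · simp [hd0]
  have hdpos : 0 < d := by
    rcases lt_or_gt_of_ne hd0 with h | h
    · exfalso
      have hs : Tendsto (slope u t) (𝓝[>] t) (𝓝 d) :=
        (hasDerivAt_iff_tendsto_slope.1 hd).mono_left
          (nhdsWithin_mono _ fun x hx => ne_of_gt hx)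
      have : ∀ᶠ s in 𝓝[>] t, slope u t s < 0 :=
        hs.eventually (eventually_lt_nhds h)
      rcases (this.and self_mem_nhdsWithin).exists with ⟨s, hsneg, hst⟩
      have : 0 ≤ slope u t s := by
        rw [slope_def_field]
        exact div_nonneg (by linarith [hu_mono (le_of_lt hst)]) (by linarith [hst.le])
      linarith
    · exact h
  exfalso
  -- eventually on the right of t : g s > g t / 2 and u s > u t
  have hslope : Tendsto (slope u t) (𝓝[>] t) (𝓝 d) :=
    (hasDerivAt_iff_tendsto_slope.1 hd).mono_left
      (nhdsWithin_mono _ fun x hx => ne_of_gt hx)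
  have h1 : ∀ᶠ s in 𝓝[>] t, d / 2 < slope u t s :=
    hslope.eventually (eventually_gt_nhds (by linarith))
  have h2 : ∀ᶠ s in 𝓝[>] t, g t / 2 < g s := by
    have : Tendsto g (𝓝[Set.Ici 0] t) (𝓝 (g t)) := hg_cont t ht
    have h3 : 𝓝[>] t ≤ 𝓝[Set.Ici 0] t :=
      nhdsWithin_mono _ fun x hx => le_trans ht (le_of_lt hx)
    exact (this.mono_left h3).eventually (eventually_gt_nhds (by linarith))
  rcases mem_nhdsGT_iff_exists_Ioo_subset.1 ((h1.and h2).filter_mono le_rfl) with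
    ⟨b, hb, hIoo⟩
  simp only [Set.mem_Ioi] at hb
  set s₀ : ℝ := (t + b) / 2 with hs₀
  have hts₀ : t < s₀ := by simp [hs₀]; linarith
  have hs₀b : s₀ < b := by simp [hs₀]; linarith
  have hsub : Set.Ioc t s₀ ⊆ Set.Ioo t b := fun x hx => ⟨hx.1, lt_of_le_of_lt hx.2 hs₀b⟩
  -- u is continuous at t, so rightLim u t = u t
  have hucont : ContinuousAt u t := hd.continuousAt
  have hrl : Function.rightLim u t = u t := by
    have := (hu_mono.continuousAt_iff_leftLim_eq_rightLim).1 hucont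
    have h4 := hu_mono.leftLim_le (le_refl t)
    have h5 := hu_mono.le_rightLim (le_refl t)
    rw [← this] at h5 ⊢
    linarith
  -- the Stieltjes measure of Ioc t s₀ is positive
  have hmeas : lsMeasure u = hu_mono.stieltjesFunction.measure := by
    simp [lsMeasure, hu_mono]
  have hus₀ : u t < u s₀ := by
    have := (hIoo ⟨hts₀, hs₀b⟩).1
    rw [slope_def_field] at this
    have hpos : 0 < s₀ - t := by linarith
    nlinarith [(lt_div_iff₀ hpos).1 this]
  have hμpos : 0 < (lsMeasure u) (Set.Ioc t s₀) := by
    rw [hmeas, StieltjesFunction.measure_Ioc, hu_mono.stieltjesFunction_eq,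
      hu_mono.stieltjesFunction_eq, hrl]
    have := hu_mono.le_rightLim (le_refl s₀)
    exact ENNReal.ofReal_pos.2 (by linarith)
  -- but the integral over Ioc t s₀ is zero, contradiction
  have hsubI : Set.Ioc t s₀ ⊆ Set.Ici (0:ℝ) := fun x hx => le_trans ht hx.1.le
  have hzero : ∫⁻ x in Set.Ioc t s₀, ENNReal.ofReal (g x) ∂(lsMeasure u) = 0 :=
    le_antisymm (hint ▸ lintegral_mono_set hsubI) zero_le
  have hlow : ENNReal.ofReal (g t / 2) * (lsMeasure u) (Set.Ioc t s₀)
      ≤ ∫⁻ x in Set.Ioc t s₀, ENNReal.ofReal (g x) ∂(lsMeasure u) := by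
    rw [← setLIntegral_const]
    have hgm : AEMeasurable (fun x => ENNReal.ofReal (g x)) ((lsMeasure u).restrict (Set.Ioc t s₀)) :=
      ENNReal.measurable_ofReal.comp_aemeasurable
        (((hg_cont.mono hsubI).aemeasurable measurableSet_Ioc))
    refine setLIntegral_mono_ae hgm ?_
    refine Filter.Eventually.of_forall fun x hx => ?_
    exact ENNReal.ofReal_le_ofReal (le_of_lt (hIoo (hsub hx)).2)
  rw [hzero] at hlow
  have : ENNReal.ofReal (g t / 2) * (lsMeasure u) (Set.Ioc t s₀) = 0 := le_antisymm hlow zero_le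
  rcases mul_eq_zero.1 this with h | h
  · exact absurd h (by simp [ENNReal.ofReal_eq_zero]; linarith)
  · exact absurd h (ne_of_gt hμpos)
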